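/- Let Z and S be finite nonempty sets, d a positive integer, and B > 0, λ > 0, k > 0 real numbers. Let φ : Z → ℝ^d and ω : S → ℝ^d be functions, let g : S → ℝ satisfy |g(s)| ≤ B for all s ∈ S, and set w = Σ_{s∈S} ω(s)·g(s) ∈ ℝ^d; assume ‖w‖₂² ≤ B²·d. Let ν and β be probability distributions on Z and define the positive definite matrix Σ_β = k·E_{z∼β}[φ(z)·φ(z)ᵀ] + λ·I. Then E_{z∼ν}[φ(z)ᵀ·w] ≤ E_{z∼ν}[√(φ(z)ᵀ·Σ_β⁻¹·φ(z))] · √(k·E_{z∼β}[(φ(z)ᵀ·w)²] + B²·λ·d). -/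

import Mathlib

open Matrix
open scoped Matrix

private lemma sum_mulVec' {ι n : Type} [Fintype n] (s : Finset ι)
    (A : ι → Matrix n n ℝ) (x : n → ℝ) :
    (∑ i ∈ s, A i) *ᵥ x = ∑ i ∈ s, (A i) *ᵥ x := by
  classical
  induction s using Finset.induction_on with
  | empty => simp
  | insert a s ha ih => simp [Finset.sum_insert ha, Matrix.add_mulVec, ih]

private lemma dot_sum' {ι n : Type} [Fintype n] (s : Finset ι)
    (x : n → ℝ) (f : ι → n → ℝ) :
    x ⬝ᵥ (∑ i ∈ s, f i) = ∑ i ∈ s, x ⬝ᵥ f i := by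
  classical
  induction s using Finset.induction_on with
  | empty => simp
  | insert a s ha ih => simp [Finset.sum_insert ha, dotProduct_add, ih]

private lemma vecMulVec_mulVec' {n : Type} [Fintype n] (u v x : n → ℝ) :
    vecMulVec u v *ᵥ x = (v ⬝ᵥ x) • u := by
  funext i
  simp only [Matrix.mulVec, dotProduct, vecMulVec_apply, Pi.smul_apply,
    smul_eq_mul, Finset.sum_mul]
  exact Finset.sum_congr rfl fun j _ => by ring

private lemma cs_dot {n : Type} [Fintype n] (a b : n → ℝ) :
    a ⬝ᵥ b ≤ Real.sqrt (a ⬝ᵥ a) * Real.sqrt (b ⬝ᵥ b) := by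
  have h := Finset.sum_mul_sq_le_sq_mul_sq Finset.univ a b
  have haa : a ⬝ᵥ a = ∑ i, a i ^ 2 := by simp [dotProduct, sq]
  have hbb : b ⬝ᵥ b = ∑ i, b i ^ 2 := by simp [dotProduct, sq]
  calc a ⬝ᵥ b ≤ |a ⬝ᵥ b| := le_abs_self _
    _ = Real.sqrt ((a ⬝ᵥ b) ^ 2) := (Real.sqrt_sq_eq_abs _).symm
    _ ≤ Real.sqrt ((∑ i, a i ^ 2) * ∑ i, b i ^ 2) := Real.sqrt_le_sqrt h
    _ = Real.sqrt (a ⬝ᵥ a) * Real.sqrt (b ⬝ᵥ b) := by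
        rw [haa, hbb, Real.sqrt_mul (by positivity)]

theorem stmt_12 (Z S : Type) [Fintype Z] [Nonempty Z] [Fintype S] [Nonempty S]
    (d : ℕ) (hd : 0 < d) (B lam k : ℝ) (hB : 0 < B) (hlam : 0 < lam) (hk : 0 < k)
    (φ : Z → Fin d → ℝ) (ω : S → Fin d → ℝ) (g : S → ℝ)
    (hg : ∀ s, |g s| ≤ B)
    (hw : ∑ i, ((∑ s, g s • ω s) i) ^ 2 ≤ B ^ 2 * d)
    (ν β : Z → ℝ)
    (hν0 : ∀ z, 0 ≤ ν z) (hν1 : ∑ z, ν z = 1)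
    (hβ0 : ∀ z, 0 ≤ β z) (hβ1 : ∑ z, β z = 1) :
    ∑ z, ν z * (φ z ⬝ᵥ (∑ s, g s • ω s))
      ≤ (∑ z, ν z * Real.sqrt (φ z ⬝ᵥ
            ((k • (∑ z', β z' • Matrix.vecMulVec (φ z') (φ z'))
              + lam • (1 : Matrix (Fin d) (Fin d) ℝ))⁻¹ *ᵥ φ z)))
        * Real.sqrt (k * (∑ z, β z * (φ z ⬝ᵥ (∑ s, g s • ω s)) ^ 2) + B ^ 2 * lam * d) := by
  classical
  set w : Fin d → ℝ := ∑ s, g s • ω s with hw_def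
  set Sb : Matrix (Fin d) (Fin d) ℝ := ∑ z', β z' • Matrix.vecMulVec (φ z') (φ z') with hSb
  set M : Matrix (Fin d) (Fin d) ℝ := k • Sb + lam • (1 : Matrix (Fin d) (Fin d) ℝ) with hM_def
  -- expansion of the quadratic form
  have expand : ∀ x y : Fin d → ℝ, x ⬝ᵥ (M *ᵥ y)
      = k * (∑ z', β z' * ((φ z' ⬝ᵥ x) * (φ z' ⬝ᵥ y))) + lam * (x ⬝ᵥ y) := by
    intro x y
    have h1 : Sb *ᵥ y = ∑ z', (β z' * (φ z' ⬝ᵥ y)) • φ z' := by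
      rw [hSb, sum_mulVec']
      refine Finset.sum_congr rfl fun z' _ => ?_
      rw [Matrix.smul_mulVec, vecMulVec_mulVec', smul_smul]
    rw [hM_def, Matrix.add_mulVec, Matrix.smul_mulVec, Matrix.smul_mulVec,
      Matrix.one_mulVec, dotProduct_add, dotProduct_smul, dotProduct_smul, h1, dot_sum']
    simp only [smul_eq_mul, dotProduct_smul, Finset.mul_sum]
    congr 1
    exact Finset.sum_congr rfl fun z' _ => by rw [dotProduct_comm (φ z') x]; ring
  have hdotself : ∀ x : Fin d → ℝ, x ⬝ᵥ x = ∑ i, x i ^ 2 := by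
    intro x; simp [dotProduct, sq]
  -- M is positive definite
  have hMpd : M.PosDef := by
    refine Matrix.PosDef.of_dotProduct_mulVec_pos ?_ ?_
    · ext i j
      simp only [hM_def, hSb, Matrix.conjTranspose_apply, Matrix.add_apply, Matrix.smul_apply,
        Matrix.sum_apply, vecMulVec_apply, Matrix.one_apply, smul_eq_mul, star_trivial]
      have h1 : (∑ z', β z' * (φ z' j * φ z' i)) = ∑ z', β z' * (φ z' i * φ z' j) :=
        Finset.sum_congr rfl fun z _ => by ring
      have h2 : (if j = i then (1:ℝ) else 0) = (if i = j then 1 else 0) := by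
        simp [eq_comm]
      rw [h1, h2]
    · intro x hx
      have : star x = x := by funext i; simp
      rw [this, expand]
      have hx2 : 0 < x ⬝ᵥ x := by
        rw [hdotself]
        rcases Function.ne_iff.mp hx with ⟨i, hi⟩
        have h0 : 0 < x i ^ 2 := lt_of_le_of_ne (sq_nonneg _) (Ne.symm (pow_ne_zero 2 hi))
        exact lt_of_lt_of_le h0 (Finset.single_le_sum (f := fun i => x i ^ 2)
          (fun j _ => sq_nonneg _) (Finset.mem_univ i))
      have hsum : 0 ≤ ∑ z', β z' * ((φ z' ⬝ᵥ x) * (φ z' ⬝ᵥ x)) :=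
        Finset.sum_nonneg fun z _ => mul_nonneg (hβ0 z) (mul_self_nonneg _)
      have := mul_pos hlam hx2
      nlinarith [mul_nonneg hk.le hsum]
  have hNpd : M⁻¹.PosDef := hMpd.inv
  have hNpsd : M⁻¹.PosSemidef := hNpd.posSemidef
  open scoped MatrixOrder in set R : Matrix (Fin d) (Fin d) ℝ := CFC.sqrt M⁻¹ with hR_def
  have hRR : R * R = M⁻¹ := by open scoped MatrixOrder in exact CFC.sqrt_mul_sqrt_self M⁻¹ hNpsd.nonneg
  have hRsym : Rᵀ = R := by
    have h := by open scoped MatrixOrder in exact (CFC.sqrt_nonneg M⁻¹).posSemidef.isHermitian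
    ext i j
    have h2 := congrFun (congrFun h i) j
    simpa [Matrix.conjTranspose_apply] using h2
  have hinner : ∀ u v : Fin d → ℝ, u ⬝ᵥ (M⁻¹ *ᵥ v) = (R *ᵥ u) ⬝ᵥ (R *ᵥ v) := by
    intro u v
    rw [← hRR, ← Matrix.mulVec_mulVec, dotProduct_mulVec]
    congr 1
    rw [show u ᵥ* R = u ᵥ* Rᵀ by rw [hRsym], Matrix.vecMul_transpose]
  have hMinvM : M⁻¹ *ᵥ (M *ᵥ w) = w := by
    rw [Matrix.mulVec_mulVec,
      Matrix.nonsing_inv_mul _ (isUnit_iff_ne_zero.mpr hMpd.det_pos.ne'), Matrix.one_mulVec]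
  -- bound on w ⬝ M w
  have hwMw : w ⬝ᵥ (M *ᵥ w)
      ≤ k * (∑ z, β z * (φ z ⬝ᵥ w) ^ 2) + B ^ 2 * lam * d := by
    rw [expand]
    have h1 : (∑ z', β z' * ((φ z' ⬝ᵥ w) * (φ z' ⬝ᵥ w))) = ∑ z, β z * (φ z ⬝ᵥ w) ^ 2 :=
      Finset.sum_congr rfl fun z _ => by ring
    have h2 : w ⬝ᵥ w ≤ B ^ 2 * d := by rw [hdotself]; exact hw
    have := mul_le_mul_of_nonneg_left h2 hlam.le
    rw [h1]; nlinarith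
  have hT0 : 0 ≤ k * (∑ z, β z * (φ z ⬝ᵥ w) ^ 2) + B ^ 2 * lam * d := by
    have : 0 ≤ ∑ z, β z * (φ z ⬝ᵥ w) ^ 2 :=
      Finset.sum_nonneg fun z _ => mul_nonneg (hβ0 z) (sq_nonneg _)
    exact add_nonneg (mul_nonneg hk.le this) (by positivity)
  -- pointwise Cauchy-Schwarz
  have key : ∀ z, φ z ⬝ᵥ w
      ≤ Real.sqrt (φ z ⬝ᵥ (M⁻¹ *ᵥ φ z))
        * Real.sqrt (k * (∑ z, β z * (φ z ⬝ᵥ w) ^ 2) + B ^ 2 * lam * d) := by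
    intro z
    have e1 : φ z ⬝ᵥ w = (R *ᵥ φ z) ⬝ᵥ (R *ᵥ (M *ᵥ w)) := by
      rw [← hinner, hMinvM]
    have e2 : (R *ᵥ φ z) ⬝ᵥ (R *ᵥ φ z) = φ z ⬝ᵥ (M⁻¹ *ᵥ φ z) := (hinner _ _).symm
    have e3 : (R *ᵥ (M *ᵥ w)) ⬝ᵥ (R *ᵥ (M *ᵥ w)) = w ⬝ᵥ (M *ᵥ w) := by
      rw [← hinner, hMinvM, dotProduct_comm]
    calc φ z ⬝ᵥ w = (R *ᵥ φ z) ⬝ᵥ (R *ᵥ (M *ᵥ w)) := e1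
      _ ≤ Real.sqrt ((R *ᵥ φ z) ⬝ᵥ (R *ᵥ φ z))
          * Real.sqrt ((R *ᵥ (M *ᵥ w)) ⬝ᵥ (R *ᵥ (M *ᵥ w))) := cs_dot _ _
      _ = Real.sqrt (φ z ⬝ᵥ (M⁻¹ *ᵥ φ z)) * Real.sqrt (w ⬝ᵥ (M *ᵥ w)) := by rw [e2, e3]
      _ ≤ _ := by
          exact mul_le_mul_of_nonneg_left (Real.sqrt_le_sqrt hwMw) (Real.sqrt_nonneg _)
  calc ∑ z, ν z * (φ z ⬝ᵥ w)
      ≤ ∑ z, ν z * (Real.sqrt (φ z ⬝ᵥ (M⁻¹ *ᵥ φ z))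
          * Real.sqrt (k * (∑ z, β z * (φ z ⬝ᵥ w) ^ 2) + B ^ 2 * lam * d)) :=
        Finset.sum_le_sum fun z _ => mul_le_mul_of_nonneg_left (key z) (hν0 z)
    _ = (∑ z, ν z * Real.sqrt (φ z ⬝ᵥ (M⁻¹ *ᵥ φ z)))
          * Real.sqrt (k * (∑ z, β z * (φ z ⬝ᵥ w) ^ 2) + B ^ 2 * lam * d) := by
        rw [Finset.sum_mul]
        exact Finset.sum_congr rfl fun z _ => by ring
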